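/- Let N ≥ 1 and let τ_{j,N} = -cos(jπ/N) for j = 0, 1, ..., N be the Chebyshev points of the second kind. Set ρ_0 = ρ_N = 2 and ρ_j = 1 for 1 ≤ j ≤ N-1. Then for every j = 0, ..., N, the barycentric weight w_{j,N} = Π_{n=0, n≠j}^{N} (τ_{j,N} - τ_{n,N})^{-1} satisfies w_{j,N} = (-1)^{N-j} · 2^{N-1}/(ρ_j N). -/

import Mathlib

open Real

section ChebAux
open Finset


lemma one_sub_exp (θ : ℝ) :
    (1 : ℂ) - Complex.exp (2*θ*Complex.I) =
      2 * Real.sin θ * Complex.exp ((θ - π/2)*Complex.I) := by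
  rw [show ((2:ℂ)*θ) = ((2*θ:ℝ):ℂ) by push_cast; ring,
      show ((θ:ℂ) - (π:ℝ)/2) = ((θ - π/2:ℝ):ℂ) by push_cast; ring,
      Complex.exp_mul_I, Complex.exp_mul_I,
      ← Complex.ofReal_cos, ← Complex.ofReal_sin, ← Complex.ofReal_cos, ← Complex.ofReal_sin]
  have h1 : Real.cos (2*θ) = 1 - 2 * Real.sin θ ^ 2 := by
    nlinarith [Real.cos_two_mul θ, Real.sin_sq_add_cos_sq θ]
  have h2 : Real.sin (2*θ) = 2 * Real.sin θ * Real.cos θ := Real.sin_two_mul θ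
  have h3 : Real.cos (θ - π/2) = Real.sin θ := by
    rw [Real.cos_sub]; simp
  have h4 : Real.sin (θ - π/2) = -Real.cos θ := by
    rw [Real.sin_sub]; simp
  rw [h1, h2, h3, h4]
  push_cast
  ring

lemma prod_sin (M : ℕ) (hM : 1 ≤ M) :
    ∏ k ∈ Finset.Ico 1 M, Real.sin (k * π / M) = M / 2^(M-1) := by
  obtain ⟨n, rfl⟩ : ∃ n, M = n + 1 := ⟨M - 1, by omega⟩
  rcases Nat.eq_zero_or_pos n with rfl | hn
  · simp
  have hprim := Complex.isPrimitiveRoot_exp (n+1) (by omega)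
  have key := hprim.prod_one_sub_pow_eq_order
  push_cast at key
  have hterm : ∀ k ∈ Finset.range n,
      (1 : ℂ) - (Complex.exp (2*π*Complex.I/(n+1))) ^ (k+1) =
      2 * Real.sin ((k+1)*π/(n+1)) *
        Complex.exp (((k+1)*π/(n+1) - π/2)*Complex.I) := by
    intro k _
    rw [← Complex.exp_nat_mul]
    rw [show ((k+1 : ℕ) : ℂ) * (2*π*Complex.I/(n+1)) =
        2*(((k+1 : ℕ)*π/(n+1) : ℝ) : ℂ)*Complex.I by push_cast; ring]
    rw [one_sub_exp]
    norm_num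
  rw [Finset.prod_congr rfl hterm, Finset.prod_mul_distrib, ← Complex.exp_sum] at key
  have hr : ∑ k ∈ Finset.range n, (((k:ℝ)+1)*π/(n+1) - π/2) = 0 := by
    have h2 : ∑ k ∈ Finset.range n, ((k:ℝ)+1) = n*(n+1)/2 := by
      have h5 := Finset.sum_range_id_mul_two (n+1)
      simp only [Nat.add_sub_cancel] at h5
      have h3 : ((∑ i ∈ Finset.range (n+1), i : ℕ) : ℝ) * 2 = ((n:ℝ)+1)*n := by
        exact_mod_cast congrArg (Nat.cast : ℕ → ℝ) h5
      rw [Finset.sum_range_succ] at h3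
      push_cast at h3
      have h4 : ∑ k ∈ Finset.range n, ((k:ℝ)+1) = (∑ i ∈ Finset.range n, (i:ℝ)) + n := by
        rw [Finset.sum_add_distrib]; simp
      rw [h4]; linarith
    have hne : ((n:ℝ)+1) ≠ 0 := by positivity
    calc ∑ k ∈ Finset.range n, (((k:ℝ)+1)*π/(n+1) - π/2)
        = (∑ k ∈ Finset.range n, ((k:ℝ)+1)) * π/(n+1) - n*(π/2) := by
          rw [Finset.sum_sub_distrib, ← Finset.sum_div, ← Finset.sum_mul]; simp
      _ = 0 := by rw [h2]; field_simp; ring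
  have hsum : ∑ k ∈ Finset.range n,
      ((((k:ℂ))+1)*(π:ℂ)/((n:ℂ)+1) - (π:ℂ)/2) * Complex.I = 0 := by
    have hc : ∀ k : ℕ, (((k:ℂ))+1)*(π:ℂ)/((n:ℂ)+1) - (π:ℂ)/2
        = ((((k:ℝ)+1)*π/(n+1) - π/2 : ℝ) : ℂ) := by
      intro k; push_cast; ring
    simp_rw [hc, ← Finset.sum_mul, ← Complex.ofReal_sum, hr]
    simp
  rw [hsum, Complex.exp_zero, mul_one] at key
  have key2 : ((∏ k ∈ Finset.range n, (2 * Real.sin ((k+1)*π/(n+1))) : ℝ) : ℂ)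
      = (((n:ℝ)+1 : ℝ) : ℂ) := by
    push_cast [Complex.ofReal_prod] at key ⊢
    exact key
  have key3 := Complex.ofReal_injective key2
  rw [Finset.prod_mul_distrib, Finset.prod_const, Finset.card_range] at key3
  have hIco : ∏ k ∈ Finset.Ico 1 (n+1), Real.sin (k * π / ((n:ℝ)+1))
      = ∏ k ∈ Finset.range n, Real.sin (((k:ℝ)+1)*π/((n:ℝ)+1)) := by
    rw [Finset.prod_Ico_eq_prod_range]
    apply Finset.prod_congr (by norm_num)
    intro k _
    push_cast
    ring_nf
  have h2n : (2:ℝ)^n ≠ 0 := by positivity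
  push_cast [Nat.add_sub_cancel]
  rw [hIco, eq_div_iff h2n, mul_comm]
  exact key3

noncomputable def sN (N k : ℕ) : ℝ := Real.sin ((k:ℝ)*π/(2*N))

lemma tau_sub (N : ℕ) (a b : ℝ) :
    Real.cos (b*π/N) - Real.cos (a*π/N) =
      2 * Real.sin ((a+b)*π/(2*N)) * Real.sin ((a-b)*π/(2*N)) := by
  rw [Real.cos_sub_cos,
      show (b*π/N + a*π/N)/2 = (a+b)*π/(2*N) by ring,
      show (b*π/N - a*π/N)/2 = -((a-b)*π/(2*N)) by ring,
      Real.sin_neg]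
  ring

lemma term_lt (N : ℕ) {j n : ℕ} (hn : n < j) :
    Real.cos ((n:ℝ)*π/N) - Real.cos ((j:ℝ)*π/N) = 2 * sN N (j+n) * sN N (j-n) := by
  rw [tau_sub N (j:ℝ) (n:ℝ), sN, sN, Nat.cast_add, Nat.cast_sub hn.le]

lemma term_gt (N : ℕ) {j n : ℕ} (hn : j < n) :
    Real.cos ((n:ℝ)*π/N) - Real.cos ((j:ℝ)*π/N) = -(2 * sN N (j+n) * sN N (n-j)) := by
  rw [tau_sub N (j:ℝ) (n:ℝ), sN, sN, Nat.cast_add, Nat.cast_sub hn.le]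
  rw [show ((j:ℝ)-(n:ℝ))*π/(2*N) = -(((n:ℝ)-(j:ℝ))*π/(2*N)) by ring, Real.sin_neg]
  ring

lemma csN (N : ℕ) (hN : 1 ≤ N) : sN N N = 1 := by
  have hNne : (N:ℝ) ≠ 0 := by positivity
  rw [sN, show (N:ℝ)*π/(2*N) = π/2 by field_simp]
  exact Real.sin_pi_div_two

lemma s_refl (N : ℕ) (hN : 1 ≤ N) {k : ℕ} (hk : k ≤ 2*N) :
    sN N (2*N - k) = sN N k := by
  have hNne : (N:ℝ) ≠ 0 := by positivity
  rw [sN, sN, Nat.cast_sub hk]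
  rw [show (((2*N:ℕ):ℝ) - k)*π/(2*N) = π - (k:ℝ)*π/(2*N) by push_cast; field_simp]
  exact Real.sin_pi_sub _

lemma s_pos (N : ℕ) {k : ℕ} (h1 : 1 ≤ k) (h2 : k < 2*N) :
    0 < sN N k := by
  have hNpos : (0:ℝ) < N := by
    have : 1 ≤ N := by omega
    exact_mod_cast Nat.pos_of_ne_zero (by omega)
  apply Real.sin_pos_of_pos_of_lt_pi
  · positivity
  · rw [div_lt_iff₀ (by positivity)]
    have : (k:ℝ) < 2*N := by exact_mod_cast h2
    nlinarith [Real.pi_pos]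

lemma s_double (N : ℕ) (hN : 1 ≤ N) {j : ℕ} (hj : j ≤ N) :
    sN N (2*j) = 2 * sN N j * sN N (N - j) := by
  have hNne : (N:ℝ) ≠ 0 := by positivity
  rw [sN, sN, sN]
  rw [show ((2*j:ℕ):ℝ)*π/(2*N) = 2*((j:ℝ)*π/(2*N)) by push_cast; ring,
      Real.sin_two_mul,
      show (((N - j:ℕ)):ℝ)*π/(2*N) = π/2 - (j:ℝ)*π/(2*N) by
        rw [Nat.cast_sub hj]; field_simp,
      Real.sin_pi_div_two_sub]

lemma P2sq (N : ℕ) (hN : 1 ≤ N) :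
    (∏ k ∈ Finset.Ico 1 N, sN N k)^2 = N / 2^(2*N-2) := by
  have h := prod_sin (2*N) (by omega)
  push_cast at h
  have hconv : ∀ k : ℕ, Real.sin ((k:ℝ)*π/(2*(N:ℝ))) = sN N k := by
    intro k; rw [sN]
  simp only [hconv] at h
  have hsplit : ∏ k ∈ Finset.Ico 1 (2*N), sN N k
      = (∏ k ∈ Finset.Ico 1 N, sN N k) * ∏ k ∈ Finset.Ico N (2*N), sN N k := by
    rw [Finset.prod_Ico_consecutive]
    · omega
    · omega
  have hbot : ∏ k ∈ Finset.Ico N (2*N), sN N k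
      = sN N N * ∏ k ∈ Finset.Ico (N+1) (2*N), sN N k := by
    rw [Finset.prod_eq_prod_Ico_succ_bot (by omega)]
  have hrefl : ∏ k ∈ Finset.Ico (N+1) (2*N), sN N k
      = ∏ k ∈ Finset.Ico 1 N, sN N k := by
    apply Finset.prod_nbij' (fun k => 2*N - k) (fun k => 2*N - k)
    · intro a ha; simp only [Finset.mem_Ico] at *; omega
    · intro a ha; simp only [Finset.mem_Ico] at *; omega
    · intro a ha; simp only [Finset.mem_Ico] at ha; omega
    · intro a ha; simp only [Finset.mem_Ico] at ha; omega
    · intro a ha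
      simp only [Finset.mem_Ico] at ha
      exact (s_refl N hN (by omega)).symm
  rw [hsplit, hbot, hrefl, csN N hN, one_mul, ← sq] at h
  rw [h]
  have h2 : (2:ℝ)^(2*N-1) ≠ 0 := by positivity
  rw [show 2*N-1 = (2*N-2)+1 by omega, pow_succ]
  field_simp

lemma keyMidHalf (N j : ℕ) (hN : 1 ≤ N) (h1 : 1 ≤ j) (h2 : 2*j ≤ N) :
    ∏ n ∈ (Finset.range (N+1)).erase j, (Real.cos ((n:ℝ)*π/N) - Real.cos ((j:ℝ)*π/N))
      = (-1:ℝ)^(N-j) * N / 2^(N-1) := by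
  have hjN : j < N := by omega
  -- split the index set
  have hsplit : (Finset.range (N+1)).erase j
      = Finset.range j ∪ Finset.Ico (j+1) (N+1) := by
    ext a
    simp only [Finset.mem_erase, Finset.mem_range, Finset.mem_union, Finset.mem_Ico]
    omega
  have hdisj : Disjoint (Finset.range j) (Finset.Ico (j+1) (N+1)) := by
    rw [Finset.disjoint_left]
    intro a ha hb
    simp only [Finset.mem_range, Finset.mem_Ico] at *
    omega
  rw [hsplit, Finset.prod_union hdisj]
  -- region 1
  have hreg1 : ∏ n ∈ Finset.range j, (Real.cos ((n:ℝ)*π/N) - Real.cos ((j:ℝ)*π/N))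
      = 2^j * (∏ i ∈ Finset.Ico j (2*j), sN N i) * (∏ i ∈ Finset.Ico 1 (j+1), sN N i) := by
    calc ∏ n ∈ Finset.range j, (Real.cos ((n:ℝ)*π/N) - Real.cos ((j:ℝ)*π/N))
        = ∏ n ∈ Finset.range j, (2 * sN N (j+n) * sN N (j-n)) := by
          apply Finset.prod_congr rfl
          intro n hn
          exact term_lt N (Finset.mem_range.mp hn)
      _ = (∏ _n ∈ Finset.range j, 2) * (∏ n ∈ Finset.range j, sN N (j+n))
            * (∏ n ∈ Finset.range j, sN N (j-n)) := by
          rw [← Finset.prod_mul_distrib, ← Finset.prod_mul_distrib]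
      _ = 2^j * (∏ i ∈ Finset.Ico j (2*j), sN N i) * (∏ i ∈ Finset.Ico 1 (j+1), sN N i) := by
          congr 1
          · congr 1
            · simp
            · rw [Finset.prod_Ico_eq_prod_range]
              apply Finset.prod_congr (by first | rfl | (congr 1 <;> omega))
              intros; congr 1
          · calc ∏ n ∈ Finset.range j, sN N (j-n)
                = ∏ n ∈ Finset.range j, sN N ((j-1-n)+1) := by
                  apply Finset.prod_congr rfl
                  intro n hn
                  simp only [Finset.mem_range] at hn
                  congr 1
                  omega
              _ = ∏ n ∈ Finset.range j, sN N (n+1) := Finset.prod_range_reflect (fun n => sN N (n+1)) j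
              _ = ∏ i ∈ Finset.Ico 1 (j+1), sN N i := by
                  rw [Finset.prod_Ico_eq_prod_range]
                  apply Finset.prod_congr (by first | rfl | (congr 1 <;> omega))
                  intros; congr 1; omega
  -- region 2
  have hreg2 : ∏ n ∈ Finset.Ico (j+1) (N+1), (Real.cos ((n:ℝ)*π/N) - Real.cos ((j:ℝ)*π/N))
      = (-1:ℝ)^(N-j) * 2^(N-j) * (∏ i ∈ Finset.Ico (2*j+1) (N+j+1), sN N i)
          * (∏ i ∈ Finset.Ico 1 (N-j+1), sN N i) := by
    calc ∏ n ∈ Finset.Ico (j+1) (N+1), (Real.cos ((n:ℝ)*π/N) - Real.cos ((j:ℝ)*π/N))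
        = ∏ n ∈ Finset.Ico (j+1) (N+1), (-1 * (2 * sN N (j+n) * sN N (n-j))) := by
          apply Finset.prod_congr rfl
          intro n hn
          simp only [Finset.mem_Ico] at hn
          rw [term_gt N hn.1]
          ring
      _ = (∏ _n ∈ Finset.Ico (j+1) (N+1), (-1:ℝ)) * ((∏ _n ∈ Finset.Ico (j+1) (N+1), (2:ℝ))
            * (∏ n ∈ Finset.Ico (j+1) (N+1), sN N (j+n))
            * (∏ n ∈ Finset.Ico (j+1) (N+1), sN N (n-j))) := by
          rw [← Finset.prod_mul_distrib, ← Finset.prod_mul_distrib, ← Finset.prod_mul_distrib]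
      _ = (-1:ℝ)^(N-j) * 2^(N-j) * (∏ i ∈ Finset.Ico (2*j+1) (N+j+1), sN N i)
            * (∏ i ∈ Finset.Ico 1 (N-j+1), sN N i) := by
          rw [Finset.prod_const, Finset.prod_const, Nat.card_Ico]
          have hcard : N + 1 - (j+1) = N - j := by omega
          rw [hcard]
          rw [show ∏ n ∈ Finset.Ico (j+1) (N+1), sN N (j+n)
              = ∏ i ∈ Finset.Ico (2*j+1) (N+j+1), sN N i by
            rw [Finset.prod_Ico_eq_prod_range, Finset.prod_Ico_eq_prod_range]
            apply Finset.prod_congr (by first | rfl | (congr 1 <;> omega))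
            intros; congr 1; omega]
          rw [show ∏ n ∈ Finset.Ico (j+1) (N+1), sN N (n-j)
              = ∏ i ∈ Finset.Ico 1 (N-j+1), sN N i by
            rw [Finset.prod_Ico_eq_prod_range, Finset.prod_Ico_eq_prod_range]
            apply Finset.prod_congr (by first | rfl | (congr 1 <;> omega))
            intro k hk
            simp only [Finset.mem_range] at hk
            congr 1
            omega]
          ring
  rw [hreg1, hreg2]
  -- split the long A-range
  have hA2split : ∏ i ∈ Finset.Ico (2*j+1) (N+j+1), sN N i
      = (∏ i ∈ Finset.Ico (2*j+1) (N+1), sN N i) * ∏ i ∈ Finset.Ico (N+1) (N+j+1), sN N i := by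
    rw [Finset.prod_Ico_consecutive]
    · omega
    · omega
  have hAtail : ∏ i ∈ Finset.Ico (N+1) (N+j+1), sN N i
      = ∏ i ∈ Finset.Ico (N-j) N, sN N i := by
    apply Finset.prod_nbij' (fun k => 2*N - k) (fun k => 2*N - k)
    · intro a ha; simp only [Finset.mem_Ico] at *; omega
    · intro a ha; simp only [Finset.mem_Ico] at *; omega
    · intro a ha; simp only [Finset.mem_Ico] at ha; omega
    · intro a ha; simp only [Finset.mem_Ico] at ha; omega
    · intro a ha
      simp only [Finset.mem_Ico] at ha
      exact (s_refl N hN (by omega)).symm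
  rw [hA2split, hAtail]
  have hx : sN N j ≠ 0 := ne_of_gt (s_pos N h1 (by omega))
  have hy : sN N (N-j) ≠ 0 := ne_of_gt (s_pos N (by omega) (by omega))
  have hdj : sN N (2*j) = 2 * sN N j * sN N (N-j) := s_double N hN (by omega)
  -- a*c*D = prod over Ico j (N+1)
  have hmid : (∏ i ∈ Finset.Ico j (2*j), sN N i) * (∏ i ∈ Finset.Ico (2*j+1) (N+1), sN N i)
        * sN N (2*j) = ∏ i ∈ Finset.Ico j (N+1), sN N i := by
    rw [← Finset.prod_Ico_consecutive (fun i => sN N i) (show j ≤ 2*j by omega) (show 2*j ≤ N+1 by omega),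
        Finset.prod_eq_prod_Ico_succ_bot (show 2*j < N+1 by omega) (fun i => sN N i)]
    ring
  have htop : ∏ i ∈ Finset.Ico j (N+1), sN N i = ∏ i ∈ Finset.Ico j N, sN N i := by
    rw [Finset.prod_Ico_succ_top (show j ≤ N by omega), csN N hN, mul_one]
  have hP2a : (∏ i ∈ Finset.Ico 1 (j+1), sN N i) * (∏ i ∈ Finset.Ico j N, sN N i)
      = sN N j * ∏ i ∈ Finset.Ico 1 N, sN N i := by
    rw [Finset.prod_Ico_succ_top (show 1 ≤ j by omega),
        ← Finset.prod_Ico_consecutive (fun i => sN N i) (show 1 ≤ j by omega) (show j ≤ N by omega)]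
    ring
  have hP2b : (∏ i ∈ Finset.Ico 1 (N-j+1), sN N i) * (∏ i ∈ Finset.Ico (N-j) N, sN N i)
      = sN N (N-j) * ∏ i ∈ Finset.Ico 1 N, sN N i := by
    rw [Finset.prod_Ico_succ_top (show 1 ≤ N-j by omega),
        ← Finset.prod_Ico_consecutive (fun i => sN N i) (show 1 ≤ N-j by omega) (show N-j ≤ N by omega)]
    ring
  set a := ∏ i ∈ Finset.Ico j (2*j), sN N i with ha
  set b := ∏ i ∈ Finset.Ico 1 (j+1), sN N i with hb
  set c := ∏ i ∈ Finset.Ico (2*j+1) (N+1), sN N i with hc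
  set d := ∏ i ∈ Finset.Ico (N-j) N, sN N i with hd
  set e := ∏ i ∈ Finset.Ico 1 (N-j+1), sN N i with he
  set P2 := ∏ i ∈ Finset.Ico 1 N, sN N i with hP2
  set x := sN N j with hxv
  set y := sN N (N-j) with hyv
  have habcF : b * (a * c * (2*x*y)) = x * P2 := by
    rw [← hdj, hmid, htop]
    exact hP2a
  have habc : a * b * c * (2*y) = P2 := by
    apply mul_left_cancel₀ hx
    linear_combination habcF
  have hde : e * d = y * P2 := hP2b
  have hsq : P2^2 = N / 2^(2*N-2) := P2sq N hN
  have hpow1 : (2:ℝ)^j * 2^(N-j) = 2^N := by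
    rw [← pow_add]
    congr 1
    omega
  have hpow2 : (2:ℝ)^N * ((N:ℝ) / 2^(2*N-2)) = 2 * N / 2^(N-1) := by
    have hq : (2:ℝ)^(2*N-2) = 2^(N-1) * 2^(N-1) := by
      rw [← pow_add]; congr 1; omega
    have hq2 : (2:ℝ)^N = 2 * 2^(N-1) := by
      rw [← pow_succ']; congr 1; omega
    have hne : (2:ℝ)^(N-1) ≠ 0 := by positivity
    rw [hq, hq2]
    field_simp
  apply mul_right_cancel₀ (show (2:ℝ) * y ≠ 0 from mul_ne_zero two_ne_zero hy)
  calc 2^j * a * b * ((-1:ℝ)^(N-j) * 2^(N-j) * (c * d) * e) * (2*y)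
      = (-1:ℝ)^(N-j) * (2^j * 2^(N-j)) * (a * b * c * (2*y)) * (e * d) := by ring
    _ = (-1:ℝ)^(N-j) * 2^N * P2 * (y * P2) := by rw [hpow1, habc, hde]
    _ = (-1:ℝ)^(N-j) * y * (2^N * P2^2) := by ring
    _ = (-1:ℝ)^(N-j) * y * (2^N * ((N:ℝ) / 2^(2*N-2))) := by rw [hsq]
    _ = (-1:ℝ)^(N-j) * y * (2 * N / 2^(N-1)) := by rw [hpow2]
    _ = (-1:ℝ)^(N-j) * N / 2^(N-1) * (2*y) := by ring

lemma keyMid (N j : ℕ) (hN : 1 ≤ N) (h1 : 1 ≤ j) (h2 : j ≤ N-1) :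
    ∏ n ∈ (Finset.range (N+1)).erase j, (Real.cos ((n:ℝ)*π/N) - Real.cos ((j:ℝ)*π/N))
      = (-1:ℝ)^(N-j) * N / 2^(N-1) := by
  rcases le_or_gt (2*j) N with hle | hgt
  · exact keyMidHalf N j hN h1 hle
  · have hNne : (N:ℝ) ≠ 0 := by positivity
    have hbij : ∏ n ∈ (Finset.range (N+1)).erase j,
          (Real.cos ((n:ℝ)*π/N) - Real.cos ((j:ℝ)*π/N))
        = ∏ m ∈ (Finset.range (N+1)).erase (N-j),
          ((-1:ℝ) * (Real.cos ((m:ℝ)*π/N) - Real.cos (((N-j:ℕ):ℝ)*π/N))) := by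
      apply Finset.prod_nbij' (fun n => N - n) (fun m => N - m)
      · intro a ha; simp only [Finset.mem_erase, Finset.mem_range] at *; omega
      · intro a ha; simp only [Finset.mem_erase, Finset.mem_range] at *; omega
      · intro a ha; simp only [Finset.mem_erase, Finset.mem_range] at ha; omega
      · intro a ha; simp only [Finset.mem_erase, Finset.mem_range] at ha; omega
      · intro n hn
        simp only [Finset.mem_erase, Finset.mem_range] at hn
        have hn' : n ≤ N := by omega
        have hj' : j ≤ N := by omega
        rw [Nat.cast_sub hn', Nat.cast_sub hj']
        rw [show ((N:ℝ) - n)*π/N = π - (n:ℝ)*π/N by field_simp,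
            show ((N:ℝ) - j)*π/N = π - (j:ℝ)*π/N by field_simp,
            Real.cos_pi_sub, Real.cos_pi_sub]
        ring
    rw [hbij, Finset.prod_mul_distrib, Finset.prod_const,
        Finset.card_erase_of_mem (by simp only [Finset.mem_range]; omega),
        Finset.card_range]
    have hkey := keyMidHalf N (N-j) hN (by omega) (by omega)
    rw [hkey]
    have hNN : N + 1 - 1 = N := by omega
    rw [hNN, show N - (N-j) = j by omega]
    rw [show (-1:ℝ)^N * ((-1:ℝ)^j * N / 2^(N-1)) = (-1:ℝ)^(N+j) * N / 2^(N-1) by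
      rw [pow_add]; ring]
    rw [show N + j = (N-j) + 2*j by omega, pow_add, pow_mul]
    norm_num

lemma key0 (N : ℕ) (hN : 1 ≤ N) :
    ∏ n ∈ (Finset.range (N+1)).erase 0, (Real.cos ((n:ℝ)*π/N) - Real.cos (((0:ℕ):ℝ)*π/N))
      = (-1:ℝ)^N * (2*N) / 2^(N-1) := by
  have hset : (Finset.range (N+1)).erase 0 = Finset.Ico 1 (N+1) := by
    ext a
    simp only [Finset.mem_erase, Finset.mem_range, Finset.mem_Ico]
    omega
  rw [hset]
  have hterm : ∀ n ∈ Finset.Ico 1 (N+1),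
      Real.cos ((n:ℝ)*π/N) - Real.cos (((0:ℕ):ℝ)*π/N)
        = (-1:ℝ) * (2 * (sN N n * sN N n)) := by
    intro n hn
    simp only [Finset.mem_Ico] at hn
    have := term_gt N (j := 0) (n := n) (by omega)
    simp only [Nat.zero_add, Nat.sub_zero] at this
    rw [this]
    ring
  rw [Finset.prod_congr rfl hterm, Finset.prod_mul_distrib, Finset.prod_const, Nat.card_Ico,
      Finset.prod_mul_distrib, Finset.prod_const, Nat.card_Ico]
  have hP : ∏ n ∈ Finset.Ico 1 (N+1), (sN N n * sN N n)
      = (∏ n ∈ Finset.Ico 1 N, sN N n)^2 := by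
    rw [Finset.prod_mul_distrib, Finset.prod_Ico_succ_top (by omega : 1 ≤ N), csN N hN,
        mul_one, sq]
  rw [hP, P2sq N hN]
  have hq : (2:ℝ)^(2*N-2) = 2^(N-1) * 2^(N-1) := by rw [← pow_add]; congr 1; omega
  have hq2 : (2:ℝ)^N = 2 * 2^(N-1) := by rw [← pow_succ']; congr 1; omega
  have hne : (2:ℝ)^(N-1) ≠ 0 := by positivity
  rw [show N + 1 - 1 = N by omega, hq, hq2]
  field_simp

lemma keyN (N : ℕ) (hN : 1 ≤ N) :
    ∏ n ∈ (Finset.range (N+1)).erase N, (Real.cos ((n:ℝ)*π/N) - Real.cos ((N:ℝ)*π/N))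
      = (2*N) / 2^(N-1) := by
  have hset : (Finset.range (N+1)).erase N = Finset.range N := by
    ext a
    simp only [Finset.mem_erase, Finset.mem_range]
    omega
  rw [hset]
  have hterm : ∀ n ∈ Finset.range N,
      Real.cos ((n:ℝ)*π/N) - Real.cos ((N:ℝ)*π/N)
        = 2 * (sN N (N-n) * sN N (N-n)) := by
    intro n hn
    simp only [Finset.mem_range] at hn
    have h := term_lt N (j := N) (n := n) hn
    rw [h]
    have hrefl : sN N (N + n) = sN N (N - n) := by
      have := s_refl N hN (k := N + n) (by omega)
      rw [show 2*N - (N+n) = N - n by omega] at this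
      exact this.symm
    rw [hrefl]
    ring
  rw [Finset.prod_congr rfl hterm, Finset.prod_mul_distrib, Finset.prod_const, Finset.card_range]
  have hP : ∏ n ∈ Finset.range N, (sN N (N-n) * sN N (N-n))
      = (∏ n ∈ Finset.Ico 1 N, sN N n)^2 := by
    have h1 : ∏ n ∈ Finset.range N, sN N (N-n) = ∏ n ∈ Finset.Ico 1 (N+1), sN N n := by
      calc ∏ n ∈ Finset.range N, sN N (N-n)
          = ∏ n ∈ Finset.range N, sN N ((N-1-n)+1) := by
            apply Finset.prod_congr rfl
            intro n hn
            simp only [Finset.mem_range] at hn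
            congr 1
            omega
        _ = ∏ n ∈ Finset.range N, sN N (n+1) := Finset.prod_range_reflect (fun n => sN N (n+1)) N
        _ = ∏ n ∈ Finset.Ico 1 (N+1), sN N n := by
            rw [Finset.prod_Ico_eq_prod_range]
            apply Finset.prod_congr (by first | rfl | (congr 1 <;> omega))
            intros; congr 1; omega
    rw [Finset.prod_mul_distrib, h1,
        Finset.prod_Ico_succ_top (by omega : 1 ≤ N), csN N hN, mul_one, sq]
  rw [hP, P2sq N hN]
  have hq : (2:ℝ)^(2*N-2) = 2^(N-1) * 2^(N-1) := by rw [← pow_add]; congr 1; omega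
  have hq2 : (2:ℝ)^N = 2 * 2^(N-1) := by rw [← pow_succ']; congr 1; omega
  have hne : (2:ℝ)^(N-1) ≠ 0 := by positivity
  rw [hq, hq2]
  field_simp

end ChebAux

/-- explicit formula for the barycentric weights associated with the
Chebyshev points of the second kind. -/
theorem stmt_10 (N : ℕ) (hN : 1 ≤ N) (τ : Fin (N + 1) → ℝ)
    (hτ : ∀ j, τ j = -Real.cos ((j : ℝ) * π / (N : ℝ)))
    (ρ : Fin (N + 1) → ℝ)
    (hρ0 : ρ 0 = 2) (hρN : ρ (Fin.last N) = 2)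
    (hρ : ∀ j : Fin (N + 1), 1 ≤ (j : ℕ) → (j : ℕ) ≤ N - 1 → ρ j = 1)
    (j : Fin (N + 1)) :
    (∏ n ∈ Finset.univ.erase j, (τ j - τ n)⁻¹) =
      (-1 : ℝ) ^ (N - (j : ℕ)) * 2 ^ (N - 1) / (ρ j * N) := by
  have hNR : (0:ℝ) < N := by exact_mod_cast Nat.pos_of_ne_zero (by omega)
  have hjN : (j:ℕ) ≤ N := by omega
  have hconv : ∏ n ∈ Finset.univ.erase j, (τ j - τ n)
      = ∏ n ∈ (Finset.range (N+1)).erase (j:ℕ),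
          (Real.cos ((n:ℝ)*π/N) - Real.cos (((j:ℕ):ℝ)*π/N)) := by
    apply Finset.prod_nbij' (fun (n : Fin (N+1)) => (n:ℕ))
      (fun n => (⟨n % (N+1), Nat.mod_lt _ (by omega)⟩ : Fin (N+1)))
    · intro a ha
      simp only [Finset.mem_erase, Finset.mem_univ, and_true, Finset.mem_range] at *
      constructor
      · intro hc; exact ha (Fin.ext hc)
      · exact a.isLt
    · intro a ha
      simp only [Finset.mem_erase, Finset.mem_range, Finset.mem_univ, and_true] at *
      intro hc
      apply ha.1
      rw [← Nat.mod_eq_of_lt ha.2]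
      exact congrArg Fin.val hc
    · intro a _
      apply Fin.ext
      simp [Nat.mod_eq_of_lt a.isLt]
    · intro a ha
      simp only [Finset.mem_erase, Finset.mem_range] at ha
      simp [Nat.mod_eq_of_lt ha.2]
    · intro a _
      rw [hτ, hτ]
      push_cast
      ring
  rw [Finset.prod_inv_distrib, hconv]
  have h2ne : (2:ℝ)^(N-1) ≠ 0 := by positivity
  have hNne : (N:ℝ) ≠ 0 := ne_of_gt hNR
  rcases Nat.lt_or_ge 0 (j:ℕ) with hj0 | hj0
  · rcases Nat.lt_or_ge (j:ℕ) N with hjmid | hjtop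
    · -- middle case
      rw [keyMid N (j:ℕ) hN (by omega) (by omega)]
      rw [hρ j (by omega) (by omega)]
      have hs : ((-1:ℝ))^(N-(j:ℕ)) * ((-1:ℝ))^(N-(j:ℕ)) = 1 := by
        rw [← pow_add, ← two_mul, pow_mul]
        norm_num
      apply inv_eq_of_mul_eq_one_left
      field_simp
      linear_combination hs
    · -- j = N
      have hjN' : (j:ℕ) = N := by omega
      rw [hjN']
      rw [show ((N:ℕ):ℝ) = (N:ℝ) by norm_num, keyN N hN]
      have : j = Fin.last N := Fin.ext (by simp [hjN'])
      rw [this, hρN, Nat.sub_self, pow_zero, one_mul]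
      rw [inv_div]
  · -- j = 0
    have hj0' : (j:ℕ) = 0 := by omega
    rw [hj0']
    rw [key0 N hN]
    have : j = 0 := Fin.ext (by simp [hj0'])
    rw [this, hρ0, Nat.sub_zero]
    have hs : ((-1:ℝ))^N * ((-1:ℝ))^N = 1 := by
      rw [← pow_add, ← two_mul, pow_mul]
      norm_num
    apply inv_eq_of_mul_eq_one_left
    field_simp
    linear_combination hs
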